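/- Let R be a commutative ring, r a natural number, Λ := Fin r → ℤ, and A := AddMonoidAlgebra R Λ (Laurent polynomials in r variables over R). For f ∈ A let N(f) denote the convex hull over ℝ of the image of the (finite) support of f under the coercion (Fin r → ℤ) → (Fin r → ℝ). Let e, β ∈ A with e ≠ 0 and β ≠ 0, and assume that for every λ in the support of e whose image in Fin r → ℝ is an extreme point of N(e), the coefficient of e at λ is a non-zero-divisor in R. Then e * β ≠ 0, and N(e * β) = N(e) + N(β), where + denotes the Minkowski (pointwise) sum of subsets of Fin r → ℝ. -/

import Mathlib

open Pointwise

/-- The Newton polytope of a Laurent polynomial `f` in `r` variables: the convex hull in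
`ℝ^r` of the (lattice) exponents in the support of `f`. -/
noncomputable def newtonPolytope {R : Type*} [CommRing R] {r : ℕ}
    (f : AddMonoidAlgebra R (Fin r → ℤ)) : Set (Fin r → ℝ) :=
  convexHull ℝ ((fun (m : Fin r → ℤ) (i : Fin r) => (m i : ℝ)) '' (f.coeff.support : Set (Fin r → ℤ)))

/-- If the coefficients of `e` at the exponents mapping to extreme points of its Newton
polytope are non-zero-divisors, then for any nonzero `β` the product `e * β` is nonzero
and its Newton polytope is the Minkowski sum of those of `e` and `β`. -/
theorem newtonPolytope_mul {R : Type*} [CommRing R] (r : ℕ)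
    (e β : AddMonoidAlgebra R (Fin r → ℤ)) (he : e ≠ 0) (hβ : β ≠ 0)
    (hreg : ∀ lam ∈ e.coeff.support,
      (fun i => ((lam i : ℝ))) ∈ Set.extremePoints ℝ (newtonPolytope e) →
        e.coeff lam ∈ nonZeroDivisors R) :
    e * β ≠ 0 ∧ newtonPolytope (e * β) = newtonPolytope e + newtonPolytope β := by
  classical
  set ι : (Fin r → ℤ) → (Fin r → ℝ) := fun m i => (m i : ℝ) with hιdef
  have ιinj : Function.Injective ι := by
    intro m n h
    funext i
    have h2 := congrFun h i
    simp only [hιdef] at h2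
    exact_mod_cast h2
  have ιadd : ∀ m n : Fin r → ℤ, ι (m + n) = ι m + ι n := by
    intro m n; funext i; simp [hιdef]
  set P := newtonPolytope e with hP
  set Q := newtonPolytope β with hQ
  set Se : Set (Fin r → ℝ) := ι '' (e.coeff.support : Set (Fin r → ℤ)) with hSe
  set Sβ : Set (Fin r → ℝ) := ι '' (β.coeff.support : Set (Fin r → ℤ)) with hSβ
  have hPQ : P + Q = convexHull ℝ (Se + Sβ) := (convexHull_add Se Sβ).symm
  have hSeFin : Se.Finite := e.coeff.support.finite_toSet.image _
  have hSβFin : Sβ.Finite := β.coeff.support.finite_toSet.image _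
  have hKcompact : IsCompact (P + Q) := by
    rw [hPQ]; exact (hSeFin.add hSβFin).isCompact_convexHull (𝕜 := ℝ)
  have hKconvex : Convex ℝ (P + Q) := by
    rw [hPQ]; exact convex_convexHull ℝ _
  -- easy inclusion
  have hsub1 : newtonPolytope (e * β) ⊆ P + Q := by
    rw [hPQ]
    apply convexHull_mono
    rintro _ ⟨m, hm, rfl⟩
    have hm' : m ∈ e.coeff.support + β.coeff.support := AddMonoidAlgebra.support_coeff_mul_subset e β hm
    rw [Finset.mem_add] at hm'
    obtain ⟨a, ha, b, hb, rfl⟩ := hm'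
    exact ⟨ι a, ⟨a, ha, rfl⟩, ι b, ⟨b, hb, rfl⟩, (ιadd a b).symm⟩
  -- key: extreme points of P + Q lie in the image of the support of e*β
  have key : ∀ p ∈ Set.extremePoints ℝ (P + Q), p ∈ ι '' ((e * β).coeff.support : Set (Fin r → ℤ)) := by
    intro p hp
    have hp' : p ∈ Se + Sβ := by
      have h3 : Set.extremePoints ℝ (convexHull ℝ (Se + Sβ)) ⊆ Se + Sβ :=
        extremePoints_convexHull_subset (𝕜 := ℝ) (E := Fin r → ℝ) (A := Se + Sβ)
      rw [← hPQ] at h3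
      exact h3 hp
    obtain ⟨a, ha, b, hb, hab⟩ := hp'
    obtain ⟨μ₀, hμ₀, rfl⟩ := ha
    obtain ⟨ν₀, hν₀, rfl⟩ := hb
    subst hab
    rw [mem_extremePoints] at hp
    have haP : ι μ₀ ∈ P := subset_convexHull ℝ _ ⟨μ₀, hμ₀, rfl⟩
    have hbQ : ι ν₀ ∈ Q := subset_convexHull ℝ _ ⟨ν₀, hν₀, rfl⟩
    -- uniqueness of the decomposition
    have huniq : ∀ a' ∈ P, ∀ b' ∈ Q, a' + b' = ι μ₀ + ι ν₀ → a' = ι μ₀ ∧ b' = ι ν₀ := by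
      intro a' ha' b' hb' heq
      have hmid : ι μ₀ + ι ν₀ ∈ openSegment ℝ (a' + ι ν₀) (ι μ₀ + b') := by
        refine ⟨1/2, 1/2, by norm_num, by norm_num, by norm_num, ?_⟩
        have h2 : a' + ι ν₀ + (ι μ₀ + b') = a' + b' + (ι μ₀ + ι ν₀) := by abel
        rw [← smul_add, h2, heq, smul_add, ← add_smul]
        norm_num
      obtain ⟨h1, h2⟩ := hp.2 _ (Set.add_mem_add ha' hbQ) _ (Set.add_mem_add haP hb') hmid
      constructor
      · exact add_right_cancel h1
      · exact add_left_cancel h2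
    -- ι μ₀ is an extreme point of P
    have haExt : ι μ₀ ∈ Set.extremePoints ℝ P := by
      rw [mem_extremePoints]
      refine ⟨haP, fun x₁ hx₁ x₂ hx₂ hseg => ?_⟩
      obtain ⟨t, s, ht, hs, hts, heq⟩ := hseg
      have hseg' : ι μ₀ + ι ν₀ ∈ openSegment ℝ (x₁ + ι ν₀) (x₂ + ι ν₀) := by
        refine ⟨t, s, ht, hs, hts, ?_⟩
        rw [smul_add, smul_add]
        rw [show t • x₁ + t • ι ν₀ + (s • x₂ + s • ι ν₀)
            = (t • x₁ + s • x₂) + (t + s) • ι ν₀ by rw [add_smul]; abel]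
        rw [heq, hts, one_smul]
      obtain ⟨h1, h2⟩ := hp.2 _ (Set.add_mem_add hx₁ hbQ) _ (Set.add_mem_add hx₂ hbQ) hseg'
      exact ⟨add_right_cancel h1, add_right_cancel h2⟩
    -- the coefficient of e*β at μ₀ + ν₀ is e μ₀ * β ν₀
    have hcoef : (e * β).coeff (μ₀ + ν₀) = e.coeff μ₀ * β.coeff ν₀ := by
      rw [AddMonoidAlgebra.coeff_mul]
      rw [Finsupp.sum]
      rw [Finset.sum_eq_single μ₀]
      · rw [Finsupp.sum, Finset.sum_eq_single ν₀]
        · simp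
        · intro ν hν hne
          have : ¬ (μ₀ + ν = μ₀ + ν₀) := fun h => hne (add_left_cancel h)
          simp [this]
        · intro h; simp at h; simp [h]
      · intro μ hμ hne
        rw [Finsupp.sum]
        apply Finset.sum_eq_zero
        intro ν hν
        have : ¬ (μ + ν = μ₀ + ν₀) := by
          intro h
          have hιμ : ι μ ∈ P := subset_convexHull ℝ _ ⟨μ, hμ, rfl⟩
          have hιν : ι ν ∈ Q := subset_convexHull ℝ _ ⟨ν, hν, rfl⟩
          have hsum : ι μ + ι ν = ι μ₀ + ι ν₀ := by rw [← ιadd, ← ιadd, h]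
          exact hne (ιinj (huniq _ hιμ _ hιν hsum).1)
        simp [this]
      · intro h; simp at h; simp [h]
    have hne : (e * β).coeff (μ₀ + ν₀) ≠ 0 := by
      rw [hcoef]
      intro h0
      have hreg' := hreg μ₀ hμ₀ haExt
      rw [mul_comm] at h0
      exact (Finsupp.mem_support_iff.1 hν₀) (hreg'.2 _ h0)
    exact ⟨μ₀ + ν₀, Finsupp.mem_support_iff.2 hne, ιadd μ₀ ν₀⟩
  -- hard inclusion via Krein–Milman
  have hclosed : IsClosed (newtonPolytope (e * β)) :=
    ((e * β).coeff.support.finite_toSet.image _).isClosed_convexHull (𝕜 := ℝ)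
  have hsub2 : P + Q ⊆ newtonPolytope (e * β) := by
    have hKM := closure_convexHull_extremePoints hKcompact hKconvex
    calc P + Q = closure (convexHull ℝ (Set.extremePoints ℝ (P + Q))) := hKM.symm
      _ ⊆ closure (newtonPolytope (e * β)) := by
          apply closure_mono
          apply convexHull_min _ (convex_convexHull ℝ _)
          intro p hp
          exact subset_convexHull ℝ _ (key p hp)
      _ = newtonPolytope (e * β) := hclosed.closure_eq
  have heq : newtonPolytope (e * β) = P + Q := Set.Subset.antisymm hsub1 hsub2
  refine ⟨?_, heq⟩
  intro h0
  obtain ⟨m, hm⟩ := Finsupp.support_nonempty_iff.2 (mt AddMonoidAlgebra.coeff_eq_zero.1 he)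
  obtain ⟨n, hn⟩ := Finsupp.support_nonempty_iff.2 (mt AddMonoidAlgebra.coeff_eq_zero.1 hβ)
  have : ι m + ι n ∈ newtonPolytope (e * β) := by
    rw [heq]
    exact Set.add_mem_add (subset_convexHull ℝ _ ⟨m, hm, rfl⟩) (subset_convexHull ℝ _ ⟨n, hn, rfl⟩)
  rw [h0] at this
  simp [newtonPolytope] at this
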